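/- Let p > 1 and α₁, α₂ > 0. The measure on ((√p−1)², (√p+1)²) with density √(((√p+1)² − x)(x − (√p−1)²))/(2πx) · (α₁ + α₂/x²) is a probability measure if and only if α₁ + α₂·p/(p−1)³ = 1. -/

import Mathlib

open MeasureTheory Set

lemma arcsinv_deriv {a b x : ℝ} (ha : 0 < a) (hax : a < x) (hxb : x < b) :
    HasDerivAt (fun y => Real.arcsin (((a+b)*y - 2*(a*b))/((b-a)*y)))
      (Real.sqrt (a*b) / (x * Real.sqrt ((b-x)*(x-a)))) x := by
  have hx : 0 < x := lt_trans ha hax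
  have hb : 0 < b := lt_trans hx hxb
  have hba : 0 < b - a := by linarith
  have hden : (b-a)*x ≠ 0 := by positivity
  set v : ℝ := ((a+b)*x - 2*(a*b))/((b-a)*x) with hv
  have hprod : 0 < (b-x)*(x-a) := mul_pos (by linarith) (by linarith)
  set G : ℝ := Real.sqrt ((b-x)*(x-a)) with hGdef
  have hG : 0 < G := Real.sqrt_pos.2 hprod
  have hexp : ((b-a)*x)^2 - ((a+b)*x - 2*(a*b))^2 = 4*(a*b)*((b-x)*(x-a)) := by ring
  have hnum : ((a+b)*x - 2*(a*b))^2 < ((b-a)*x)^2 := by nlinarith [mul_pos (mul_pos ha hb) hprod]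
  have hv2 : v^2 < 1 := by
    rw [hv, div_pow, div_lt_one (by positivity)]
    exact hnum
  have hvne1 : v ≠ 1 := by intro h; rw [h] at hv2; norm_num at hv2
  have hvnem1 : v ≠ -1 := by intro h; rw [h] at hv2; norm_num at hv2
  have hnum' : HasDerivAt (fun y : ℝ => (a+b)*y - 2*(a*b)) (a+b) x := by
    simpa using ((hasDerivAt_id x).const_mul (a+b)).sub_const (2*(a*b))
  have hden' : HasDerivAt (fun y : ℝ => (b-a)*y) (b-a) x := by
    simpa using (hasDerivAt_id x).const_mul (b-a)
  have hinner : HasDerivAt (fun y => ((a+b)*y - 2*(a*b))/((b-a)*y))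
      (((a+b)*((b-a)*x) - ((a+b)*x - 2*(a*b))*(b-a)) / ((b-a)*x)^2) x :=
    hnum'.div hden' hden
  have harc := (Real.hasDerivAt_arcsin hvnem1 hvne1).comp x hinner
  refine harc.congr_deriv (Eq.symm ?_)
  have hvsq : 1 - v^2 = (2/((b-a)*x))^2 * ((a*b)*((b-x)*(x-a))) := by
    rw [hv]; field_simp; ring
  set S : ℝ := Real.sqrt (a*b) with hSdef
  have hsab : S ^ 2 = a*b := Real.sq_sqrt (by positivity)
  have hS : 0 < S := Real.sqrt_pos.2 (by positivity)
  have hsq : Real.sqrt (1 - v^2) = (2/((b-a)*x)) * (S * G) := by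
    rw [hvsq, Real.sqrt_mul (by positivity), Real.sqrt_sq (by positivity),
      hSdef, hGdef, ← Real.sqrt_mul (by positivity)]
  rw [hsq]
  have hG2 : G ^ 2 = (b-x)*(x-a) := Real.sq_sqrt hprod.le
  field_simp
  linear_combination 2 * hsab

lemma sqrtprod_deriv {a b x : ℝ} (hax : a < x) (hxb : x < b) :
    HasDerivAt (fun y => Real.sqrt ((b-y)*(y-a)))
      ((a + b - 2*x)/(2*Real.sqrt ((b-x)*(x-a)))) x := by
  have hprod : 0 < (b-x)*(x-a) := mul_pos (by linarith) (by linarith)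
  have hinner : HasDerivAt (fun y : ℝ => (b-y)*(y-a)) (a + b - 2*x) x := by
    have := ((hasDerivAt_const x b).sub (hasDerivAt_id x)).mul ((hasDerivAt_id x).sub_const a)
    exact this.congr_deriv (by simp; ring)
  simpa using hinner.sqrt (ne_of_gt hprod)

lemma arcsinu_deriv {a b x : ℝ} (hax : a < x) (hxb : x < b) :
    HasDerivAt (fun y => Real.arcsin ((2*y - (a+b))/(b-a)))
      (1 / Real.sqrt ((b-x)*(x-a))) x := by
  have hba : 0 < b - a := by linarith
  have hprod : 0 < (b-x)*(x-a) := mul_pos (by linarith) (by linarith)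
  set u : ℝ := (2*x - (a+b))/(b-a) with hu
  have hu1 : u < 1 := (div_lt_one hba).2 (by linarith)
  have hum1 : -1 < u := by rw [hu, lt_div_iff₀ hba]; linarith
  have hinner : HasDerivAt (fun y : ℝ => (2*y - (a+b))/(b-a)) (2/(b-a)) x := by
    simpa using (((hasDerivAt_id x).const_mul 2).sub_const (a+b)).div_const (b-a)
  have harc := (Real.hasDerivAt_arcsin (ne_of_gt hum1) (ne_of_lt hu1)).comp x hinner
  refine harc.congr_deriv (Eq.symm ?_)
  have husq : 1 - u^2 = (2/(b-a))^2 * ((b-x)*(x-a)) := by rw [hu]; field_simp; ring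
  have hsq : Real.sqrt (1 - u^2) = (2/(b-a)) * Real.sqrt ((b-x)*(x-a)) := by
    rw [husq, Real.sqrt_mul (by positivity), Real.sqrt_sq (by positivity)]
  rw [hsq]
  have hG : 0 < Real.sqrt ((b-x)*(x-a)) := Real.sqrt_pos.2 hprod
  field_simp

lemma mp_integral_one {a b : ℝ} (ha : 0 < a) (hab : a < b) :
    ∫ x in a..b, Real.sqrt ((b-x)*(x-a)) / x
      = Real.pi * ((a+b)/2 - Real.sqrt (a*b)) := by
  have hb : 0 < b := lt_trans ha hab
  have hba : 0 < b - a := by linarith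
  set F : ℝ → ℝ := fun y => Real.sqrt ((b-y)*(y-a))
    + (a+b)/2 * Real.arcsin ((2*y - (a+b))/(b-a))
    - Real.sqrt (a*b) * Real.arcsin (((a+b)*y - 2*(a*b))/((b-a)*y)) with hF
  have hcont : ContinuousOn F (Icc a b) := by
    apply ContinuousOn.sub
    apply ContinuousOn.add
    · exact (Real.continuous_sqrt.comp (by continuity)).continuousOn
    · exact (continuous_const.mul (Real.continuous_arcsin.comp (by continuity))).continuousOn
    · apply ContinuousOn.mul continuousOn_const
      apply Real.continuous_arcsin.comp_continuousOn
      apply ContinuousOn.div (by fun_prop) (by fun_prop)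
      intro y hy
      have : 0 < y := lt_of_lt_of_le ha hy.1
      positivity
  have hderiv : ∀ x ∈ Ioo a b, HasDerivAt F (Real.sqrt ((b-x)*(x-a)) / x) x := by
    intro x hx
    obtain ⟨hax, hxb⟩ := hx
    have hx0 : 0 < x := lt_trans ha hax
    have hprod : 0 < (b-x)*(x-a) := mul_pos (by linarith) (by linarith)
    set G : ℝ := Real.sqrt ((b-x)*(x-a)) with hGdef
    have hG : 0 < G := Real.sqrt_pos.2 hprod
    have hG2 : G^2 = (b-x)*(x-a) := Real.sq_sqrt hprod.le
    set S : ℝ := Real.sqrt (a*b) with hSdef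
    have hS : 0 < S := Real.sqrt_pos.2 (by positivity)
    have hS2 : S^2 = a*b := Real.sq_sqrt (by positivity)
    have hd := ((sqrtprod_deriv hax hxb).add
        (((arcsinu_deriv hax hxb)).const_mul ((a+b)/2))).sub
        ((arcsinv_deriv ha hax hxb).const_mul S)
    refine hd.congr_deriv (Eq.symm ?_)
    rw [← hGdef, ← hSdef]
    field_simp
    linear_combination 2 * hG2 + 2 * hS2
  have hint : IntervalIntegrable (fun x => Real.sqrt ((b-x)*(x-a)) / x) volume a b := by
    apply ContinuousOn.intervalIntegrable
    rw [uIcc_of_le hab.le]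
    apply ContinuousOn.div (Real.continuous_sqrt.comp (by continuity)).continuousOn continuousOn_id
    intro y hy; exact ne_of_gt (lt_of_lt_of_le ha hy.1)
  rw [intervalIntegral.integral_eq_sub_of_hasDerivAt_of_le hab.le hcont hderiv hint]
  rw [hF]
  simp only
  rw [show (2*b - (a+b))/(b-a) = 1 by rw [div_eq_one_iff_eq (ne_of_gt hba)]; ring,
      show ((a+b)*b - 2*(a*b))/((b-a)*b) = 1 by rw [div_eq_one_iff_eq (by positivity)]; ring,
      show (2*a - (a+b))/(b-a) = -1 by rw [div_eq_iff (ne_of_gt hba)]; ring,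
      show ((a+b)*a - 2*(a*b))/((b-a)*a) = -1 by rw [div_eq_iff (by positivity)]; ring,
      Real.arcsin_one, Real.arcsin_neg_one]
  rw [show b - b = 0 by ring, show a - a = 0 by ring, zero_mul, mul_zero, Real.sqrt_zero]
  ring

lemma mp_integral_three {a b : ℝ} (ha : 0 < a) (hab : a < b) :
    ∫ x in a..b, Real.sqrt ((b-x)*(x-a)) / x^3
      = Real.pi * (b-a)^2 / (8*(a*b)*Real.sqrt (a*b)) := by
  have hb : 0 < b := lt_trans ha hab
  have hba : 0 < b - a := by linarith
  set S : ℝ := Real.sqrt (a*b) with hSdef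
  have hS : 0 < S := Real.sqrt_pos.2 (by positivity)
  have hS2 : S^2 = a*b := Real.sq_sqrt (by positivity)
  set F : ℝ → ℝ := fun y => ((a+b)/(4*(a*b)) * y⁻¹ - (1/2) * (y^2)⁻¹) * Real.sqrt ((b-y)*(y-a))
    + ((b-a)^2/(8*(a*b)*S)) * Real.arcsin (((a+b)*y - 2*(a*b))/((b-a)*y)) with hF
  have hcont : ContinuousOn F (Icc a b) := by
    apply ContinuousOn.add
    · apply ContinuousOn.mul
      · apply ContinuousOn.sub
        · exact continuousOn_const.mul (continuousOn_id.inv₀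
            (fun y hy => ne_of_gt (lt_of_lt_of_le ha hy.1)))
        · exact continuousOn_const.mul ((continuousOn_id.pow 2).inv₀
            (fun y hy => by have : 0 < y := lt_of_lt_of_le ha hy.1; show y ^ 2 ≠ 0; positivity))
      · exact (Real.continuous_sqrt.comp (by continuity)).continuousOn
    · apply ContinuousOn.mul continuousOn_const
      apply Real.continuous_arcsin.comp_continuousOn
      apply ContinuousOn.div (by fun_prop) (by fun_prop)
      intro y hy
      have : 0 < y := lt_of_lt_of_le ha hy.1
      positivity
  have hderiv : ∀ x ∈ Ioo a b, HasDerivAt F (Real.sqrt ((b-x)*(x-a)) / x^3) x := by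
    intro x hx
    obtain ⟨hax, hxb⟩ := hx
    have hx0 : 0 < x := lt_trans ha hax
    have hprod : 0 < (b-x)*(x-a) := mul_pos (by linarith) (by linarith)
    set G : ℝ := Real.sqrt ((b-x)*(x-a)) with hGdef
    have hG : 0 < G := Real.sqrt_pos.2 hprod
    have hG2 : G^2 = (b-x)*(x-a) := Real.sq_sqrt hprod.le
    have hc : HasDerivAt (fun y : ℝ => (a+b)/(4*(a*b)) * y⁻¹ - (1/2) * (y^2)⁻¹)
        ((a+b)/(4*(a*b)) * (-(x^2)⁻¹) - (1/2) * (-(2*x^1)/(x^2)^2)) x :=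
      ((hasDerivAt_inv hx0.ne').const_mul ((a+b)/(4*(a*b)))).sub
        (((hasDerivAt_pow 2 x).inv (by positivity)).const_mul (1/2))
    have hd := (hc.mul (sqrtprod_deriv hax hxb)).add
        ((arcsinv_deriv ha hax hxb).const_mul ((b-a)^2/(8*(a*b)*S)))
    refine hd.congr_deriv (Eq.symm ?_)
    rw [← hGdef, ← hSdef]
    field_simp
    linear_combination (32*x*(a+b)) * hG2
  have hint : IntervalIntegrable (fun x => Real.sqrt ((b-x)*(x-a)) / x^3) volume a b := by
    apply ContinuousOn.intervalIntegrable
    rw [uIcc_of_le hab.le]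
    apply ContinuousOn.div (Real.continuous_sqrt.comp (by continuity)).continuousOn
      (by fun_prop)
    intro y hy; have : 0 < y := lt_of_lt_of_le ha hy.1; positivity
  rw [intervalIntegral.integral_eq_sub_of_hasDerivAt_of_le hab.le hcont hderiv hint]
  rw [hF]
  simp only
  rw [show ((a+b)*b - 2*(a*b))/((b-a)*b) = 1 by rw [div_eq_one_iff_eq (by positivity)]; ring,
      show ((a+b)*a - 2*(a*b))/((b-a)*a) = -1 by rw [div_eq_iff (by positivity)]; ring,
      Real.arcsin_one, Real.arcsin_neg_one]
  rw [show b - b = 0 by ring, show a - a = 0 by ring, zero_mul, mul_zero, Real.sqrt_zero]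
  field_simp
  ring

/-- The measure on `((√p-1)², (√p+1)²)` with density
`√(((√p+1)² - x)(x - (√p-1)²))/(2πx) · (α₁ + α₂/x²)`. -/
noncomputable def fpMixture (p α₁ α₂ : ℝ) : Measure ℝ :=
  MeasureTheory.volume.withDensity
    (fun x => ENNReal.ofReal
      ((Set.Ioo ((Real.sqrt p - 1) ^ 2) ((Real.sqrt p + 1) ^ 2)).indicator
        (fun x =>
          Real.sqrt (((Real.sqrt p + 1) ^ 2 - x) * (x - (Real.sqrt p - 1) ^ 2)) /
              (2 * Real.pi * x) * (α₁ + α₂ / x ^ 2)) x))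

/-- For `p > 1` and `α₁, α₂ > 0`, the above measure is a probability measure
if and only if `α₁ + α₂·p/(p-1)³ = 1`. -/
theorem fpMixture_isProbability_iff (p α₁ α₂ : ℝ) (hp : 1 < p)
    (hα₁ : 0 < α₁) (hα₂ : 0 < α₂) :
    IsProbabilityMeasure (fpMixture p α₁ α₂) ↔ α₁ + α₂ * (p / (p - 1) ^ 3) = 1 := by
  have hπ := Real.pi_pos
  set s : ℝ := Real.sqrt p with hs
  have hp0 : (0:ℝ) < p := by linarith
  have hs1 : 1 < s := by
    rw [hs]
    have := Real.lt_sqrt (y := p) (by norm_num : (0:ℝ) ≤ 1)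
    exact this.2 (by nlinarith)
  have hsq : s^2 = p := Real.sq_sqrt hp0.le
  set a : ℝ := (s - 1)^2 with hadef
  set b : ℝ := (s + 1)^2 with hbdef
  have hs1' : 0 < s - 1 := by linarith
  have ha : 0 < a := by rw [hadef]; positivity
  have hab : a < b := by rw [hadef, hbdef]; nlinarith
  have hb : 0 < b := lt_trans ha hab
  have hsum : a + b = 2*(p+1) := by rw [hadef, hbdef]; linear_combination 2*hsq
  have hprod : a * b = (p-1)^2 := by
    rw [hadef, hbdef]; linear_combination (s^2 + p - 2)*hsq
  have hsab : Real.sqrt (a*b) = p - 1 := by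
    rw [hprod]; exact Real.sqrt_sq (by linarith)
  have hdiff : (b - a)^2 = 16*p := by rw [hadef, hbdef]; linear_combination 16*hsq
  set f : ℝ → ℝ := fun x =>
      Real.sqrt ((b - x) * (x - a)) / (2 * Real.pi * x) * (α₁ + α₂ / x ^ 2) with hf
  have hunfold : fpMixture p α₁ α₂
      = volume.withDensity (fun x => ENNReal.ofReal ((Ioo a b).indicator f x)) := rfl
  clear_value f
  clear_value a b
  clear_value s
  have hfpos : ∀ x ∈ Ioo a b, 0 ≤ f x := by
    intro x hx
    simp only [hf]
    have hx0 : 0 < x := lt_trans ha hx.1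
    have h2 : 0 < 2 * Real.pi * x := by positivity
    exact mul_nonneg (div_nonneg (Real.sqrt_nonneg _) h2.le)
      (by positivity)
  have hcf : ContinuousOn f (Icc a b) := by
    rw [hf]
    apply ContinuousOn.mul
    · apply ContinuousOn.div (Real.continuous_sqrt.comp (by fun_prop)).continuousOn
        (by fun_prop)
      intro y hy
      have : 0 < y := lt_of_lt_of_le ha hy.1
      positivity
    · apply ContinuousOn.add continuousOn_const
      apply ContinuousOn.div continuousOn_const (by fun_prop)
      intro y hy
      have : 0 < y := lt_of_lt_of_le ha hy.1
      positivity
  have hIntOn : IntegrableOn f (Ioo a b) volume :=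
    (hcf.integrableOn_Icc).mono_set Ioo_subset_Icc_self
  have hInt : Integrable ((Ioo a b).indicator f) volume :=
    (integrable_indicator_iff measurableSet_Ioo).2 hIntOn
  have hnn : 0 ≤ᵐ[volume] (Ioo a b).indicator f :=
    Filter.Eventually.of_forall (fun x => indicator_nonneg hfpos x)
  have hint1 : IntervalIntegrable (fun x => Real.sqrt ((b-x)*(x-a)) / x) volume a b := by
    apply ContinuousOn.intervalIntegrable
    rw [uIcc_of_le hab.le]
    apply ContinuousOn.div (Real.continuous_sqrt.comp (by fun_prop)).continuousOn continuousOn_id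
    intro y hy; exact ne_of_gt (lt_of_lt_of_le ha hy.1)
  have hint3 : IntervalIntegrable (fun x => Real.sqrt ((b-x)*(x-a)) / x^3) volume a b := by
    apply ContinuousOn.intervalIntegrable
    rw [uIcc_of_le hab.le]
    apply ContinuousOn.div (Real.continuous_sqrt.comp (by fun_prop)).continuousOn (by fun_prop)
    intro y hy; have : 0 < y := lt_of_lt_of_le ha hy.1; positivity
  have hsplit : ∫ x in a..b, f x
      = (α₁/(2*Real.pi)) * (∫ x in a..b, Real.sqrt ((b-x)*(x-a)) / x)
      + (α₂/(2*Real.pi)) * (∫ x in a..b, Real.sqrt ((b-x)*(x-a)) / x^3) := by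
    rw [← intervalIntegral.integral_const_mul, ← intervalIntegral.integral_const_mul,
      ← intervalIntegral.integral_add (hint1.const_mul _) (hint3.const_mul _)]
    apply intervalIntegral.integral_congr
    intro x hx
    rw [uIcc_of_le hab.le] at hx
    have hx0 : 0 < x := lt_of_lt_of_le ha hx.1
    rw [hf]
    simp only
    field_simp
  have hval : ∫ x in a..b, f x = α₁ + α₂ * (p / (p - 1) ^ 3) := by
    rw [hsplit, mp_integral_one ha hab, mp_integral_three ha hab, hsab, hsum, hprod, hdiff]
    have hp1 : p - 1 ≠ 0 := by linarith
    field_simp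
    ring
  have key : (fpMixture p α₁ α₂) univ = ENNReal.ofReal (α₁ + α₂ * (p / (p - 1) ^ 3)) := by
    rw [hunfold, withDensity_apply _ MeasurableSet.univ, Measure.restrict_univ,
      ← MeasureTheory.ofReal_integral_eq_lintegral_ofReal hInt hnn,
      MeasureTheory.integral_indicator measurableSet_Ioo,
      ← MeasureTheory.integral_Ioc_eq_integral_Ioo,
      ← intervalIntegral.integral_of_le hab.le, hval]
  constructor
  · intro h
    have := h.measure_univ
    rw [key] at this
    exact ENNReal.ofReal_eq_one.1 this
  · intro h
    exact ⟨by rw [key, h, ENNReal.ofReal_one]⟩
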